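/- For all (u₁,…,u_d) ∈ [0,1]^d, the multilinear extension copula satisfies C^⊞(u₁,…,u_d) = ∑_{S ⊆ {1,…,d}} λ_{H,S}(u₁,…,u_d) · H(F₁⁻¹(u_{S₁}),…,F_d⁻¹(u_{S_d})). In particular, for every S ⊆ {1,…,d} and every (u₁,…,u_d) ∈ [0,1]^d, C^⊞(u_{S₁},…,u_{S_d}) = H(F₁⁻¹(u_{S₁}),…,F_d⁻¹(u_{S_d})). -/

import Mathlib

open MeasureTheory Filter Topology

noncomputable section

/-- Generalized inverse `F⁻¹(u) = inf {x | F x ≥ u}` of a distribution function,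
with the convention `F⁻¹ 0 = -1`. -/
def genInv (F : ℝ → ℝ) (u : ℝ) : ℝ :=
  if u = 0 then -1 else sInf {x : ℝ | u ≤ F x}

/-- Multilinear extension `F^⊞(x) = ∫₀¹ F (x + u) du` of a univariate distribution function. -/
def mlin1 (F : ℝ → ℝ) (x : ℝ) : ℝ := ∫ u in Set.Icc (0:ℝ) 1, F (x + u)

/-- Multilinear extension `H^⊞(x) = ∫_{[0,1]^d} H (x + u) du` of a `d`-variate
distribution function. -/
def mlin (d : ℕ) (H : (Fin d → ℝ) → ℝ) (x : Fin d → ℝ) : ℝ :=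
  ∫ u in Set.Icc (0 : Fin d → ℝ) 1, H (x + u)

/-- The multilinear extension copula `C^⊞(u) = H^⊞(F₁^⊞⁻¹(u₁),…,F_d^⊞⁻¹(u_d))`
of `H` with margins `F`. -/
def mlinCopula (d : ℕ) (H : (Fin d → ℝ) → ℝ) (F : Fin d → ℝ → ℝ) (u : Fin d → ℝ) : ℝ :=
  mlin d H (fun j => genInv (mlin1 (F j)) (u j))

/-- The closed range `ℛ = {0,1} ∪ {F(k) : k ∈ ℕ}` of the distribution function `F`. -/
def clRange (F : ℝ → ℝ) : Set ℝ := {0, 1} ∪ {r : ℝ | ∃ k : ℕ, F k = r}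

/-- `u⁻`, the greatest element `r` of the closed range with `r ≤ u`. -/
def uMinus (F : ℝ → ℝ) (u : ℝ) : ℝ := sSup {r ∈ clRange F | r ≤ u}

/-- `u⁺`, the least element `r` of the closed range with `u ≤ r`. -/
def uPlus (F : ℝ → ℝ) (u : ℝ) : ℝ := sInf {r ∈ clRange F | u ≤ r}

/-- The interpolation weight `λ_F(u)`. -/
def lam (F : ℝ → ℝ) (u : ℝ) : ℝ :=
  if uMinus F u = uPlus F u then 1
  else (u - uMinus F u) / (uPlus F u - uMinus F u)

/-- The weight `λ_{H,S}(u₁,…,u_d)`; it depends on `H` only through its margins `F`. -/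
def lamS (d : ℕ) (F : Fin d → ℝ → ℝ) (S : Finset (Fin d)) (u : Fin d → ℝ) : ℝ :=
  (∏ j ∈ S, lam (F j) (u j)) * ∏ j ∈ Sᶜ, (1 - lam (F j) (u j))

/-- The point `(u_{S₁},…,u_{S_d})`: `u_{S_j} = u_j⁺` if `j ∈ S`, else `u_j⁻`. -/
def uSel (d : ℕ) (F : Fin d → ℝ → ℝ) (S : Finset (Fin d)) (u : Fin d → ℝ) : Fin d → ℝ :=
  fun j => if j ∈ S then uPlus (F j) (u j) else uMinus (F j) (u j)

/-- Generic: integral over a set of a function equal there to a finite sum of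
constants times indicators. -/
lemma setIntegral_eq_sum_indicator {α : Type*} [MeasureSpace α] {ι : Type*}
    {s : Set α} (hs : MeasurableSet s) (I : Finset ι) (B : ι → Set α)
    (hB : ∀ i ∈ I, MeasurableSet (B i)) (c : ι → ℝ) (f : α → ℝ)
    (hfin : ∀ i ∈ I, volume (B i ∩ s) ≠ ⊤)
    (hf : ∀ x ∈ s, f x = ∑ i ∈ I, c i * (B i).indicator 1 x) :
    ∫ x in s, f x = ∑ i ∈ I, c i * (volume (s ∩ B i)).toReal := by
  rw [setIntegral_congr_fun hs hf]
  rw [integral_finset_sum]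
  · refine Finset.sum_congr rfl fun i hi => ?_
    have : ∫ x in s, c i * (B i).indicator 1 x = c i * ∫ x in s, (B i).indicator (1:α → ℝ) x := by
      exact integral_const_mul _ _
    rw [this, setIntegral_indicator (hB i hi)]
    have : ∫ x in s ∩ B i, (1:α→ℝ) x = (volume (s ∩ B i)).toReal • (1:ℝ) := setIntegral_const 1
    rw [this]
    simp
  · intro i hi
    have : (fun x => c i * (B i).indicator 1 x) = fun x => (B i).indicator (fun _ => c i) x := by
      funext x
      by_cases h : x ∈ B i <;> simp [Set.indicator, h]
    rw [this]
    rw [integrable_indicator_iff (hB i hi)]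
    rw [IntegrableOn, Measure.restrict_restrict (hB i hi)]
    apply integrable_const_iff.mpr
    right
    refine ⟨?_⟩
    rw [Measure.restrict_apply_univ]
    exact lt_of_le_of_ne (le_top) (hfin i hi)

lemma mlin1_formula (F : ℝ → ℝ) (hstep : ∀ y : ℝ, F y = F (⌊y⌋ : ℝ)) (x : ℝ) :
    mlin1 F x = (1 - Int.fract x) * F (⌊x⌋ : ℝ) + Int.fract x * F ((⌊x⌋ : ℝ) + 1) := by
  set t := Int.fract x with htdef
  have ht0 : 0 ≤ t := Int.fract_nonneg x
  have ht1 : t < 1 := Int.fract_lt_one x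
  have hxt : (⌊x⌋:ℝ) + t = x := Int.floor_add_fract x
  have key : ∫ u in Set.Icc (0:ℝ) 1, F (x + u)
      = ∑ i ∈ ({0, 1} : Finset ℕ),
          (if i = 0 then F (⌊x⌋:ℝ) else F ((⌊x⌋:ℝ)+1)) *
          (volume (Set.Icc (0:ℝ) 1 ∩ (if i = 0 then Set.Ico (0:ℝ) (1 - t)
            else Set.Icc (1 - t) 1))).toReal := by
    apply setIntegral_eq_sum_indicator measurableSet_Icc _
      (fun i => if i = 0 then Set.Ico (0:ℝ) (1 - t) else Set.Icc (1 - t) 1)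
    · intro i _; split <;> [exact measurableSet_Ico; exact measurableSet_Icc]
    · intro i _
      refine ne_of_lt (lt_of_le_of_lt (measure_mono Set.inter_subset_right) ?_)
      rw [Real.volume_Icc]; simp
    · intro v hv
      obtain ⟨hv0, hv1⟩ := hv
      rw [Finset.sum_insert (by decide), Finset.sum_singleton]
      norm_num
      by_cases h : v < 1 - t
      · have hfl : ⌊x + v⌋ = ⌊x⌋ := by
          rw [Int.floor_eq_iff]
          constructor
          · linarith [Int.floor_le x]
          · push_cast; linarith
        have hmem : v ∈ Set.Ico (0:ℝ) (1-t) := ⟨hv0, h⟩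
        have hnmem : v ∉ Set.Icc (1-t) (1:ℝ) := by
          intro hc; exact absurd hc.1 (not_le.mpr h)
        rw [hstep (x + v), hfl, Set.indicator_of_mem hmem, Set.indicator_of_notMem hnmem]
        simp
      · push_neg at h
        have hfl : ⌊x + v⌋ = ⌊x⌋ + 1 := by
          rw [Int.floor_eq_iff]
          constructor
          · push_cast; linarith
          · push_cast; linarith
        have hmem : v ∈ Set.Icc (1-t) (1:ℝ) := ⟨h, hv1⟩
        have hnmem : v ∉ Set.Ico (0:ℝ) (1-t) := by
          intro hc; exact absurd hc.2 (not_lt.mpr h)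
        rw [hstep (x + v), hfl, Set.indicator_of_mem hmem, Set.indicator_of_notMem hnmem]
        push_cast
        simp
  rw [mlin1, key]
  rw [Finset.sum_insert (by decide), Finset.sum_singleton]
  norm_num
  have e1 : Set.Icc (0:ℝ) 1 ∩ Set.Ico (0:ℝ) (1-t) = Set.Ico (0:ℝ) (1-t) := by
    apply Set.inter_eq_right.mpr
    intro z hz; exact ⟨hz.1, le_trans hz.2.le (by linarith)⟩
  have e2 : Set.Icc (0:ℝ) 1 ∩ Set.Icc (1-t) 1 = Set.Icc (1-t) (1:ℝ) := by
    apply Set.inter_eq_right.mpr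
    intro z hz; exact ⟨by linarith [hz.1], hz.2⟩
  rw [e1, e2, Real.volume_Ico, Real.volume_Icc]
  rw [ENNReal.toReal_ofReal (by linarith), ENNReal.toReal_ofReal (by linarith)]
  ring

section CoordSec
variable {F : ℝ → ℝ}


lemma genInv_eq_of {G : ℝ → ℝ} (hG : Monotone G) {u x₀ : ℝ} (hu : u ≠ 0)
    (h₁ : u ≤ G x₀) (h₂ : ∀ x, u ≤ G x → x₀ ≤ x) : genInv G u = x₀ := by
  rw [genInv, if_neg hu]
  have hset : {x : ℝ | u ≤ G x} = Set.Ici x₀ := by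
    ext x
    exact ⟨fun hx => h₂ x hx, fun hx => le_trans h₁ (hG hx)⟩
  rw [hset, csInf_Ici]

lemma zero_mem_clRange : (0:ℝ) ∈ clRange F := Or.inl (Or.inl rfl)
lemma one_mem_clRange : (1:ℝ) ∈ clRange F := Or.inl (Or.inr rfl)
lemma Fk_mem_clRange (k : ℕ) : F k ∈ clRange F := Or.inr ⟨k, rfl⟩

lemma uMinus_of_mem {v : ℝ} (hv : v ∈ clRange F) : uMinus F v = v :=
  IsGreatest.csSup_eq ⟨⟨hv, le_rfl⟩, fun _ hr => hr.2⟩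

lemma uPlus_of_mem {v : ℝ} (hv : v ∈ clRange F) : uPlus F v = v :=
  IsLeast.csInf_eq ⟨⟨hv, le_rfl⟩, fun _ hr => hr.2⟩

lemma lam_of_mem {v : ℝ} (hv : v ∈ clRange F) : lam F v = 1 := by
  rw [lam, if_pos (by rw [uMinus_of_mem hv, uPlus_of_mem hv])]

/-- If `x < n` then `F x ≤ F (n-1)` for a step function. -/
lemma F_le_of_lt (hmono : Monotone F) (hstep : ∀ y : ℝ, F y = F (⌊y⌋ : ℝ))
    {x : ℝ} {n : ℤ} (h : x < n) : F x ≤ F ((n:ℝ) - 1) := by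
  rw [hstep x]
  apply hmono
  have h1 : ⌊x⌋ < n := Int.floor_lt.mpr h
  have h2 : ⌊x⌋ ≤ n - 1 := by omega
  calc (⌊x⌋:ℝ) ≤ ((n-1 : ℤ):ℝ) := by exact_mod_cast h2
    _ = (n:ℝ) - 1 := by push_cast; ring

lemma mlin1_mono (hmono : Monotone F) (hstep : ∀ y : ℝ, F y = F (⌊y⌋ : ℝ)) :
    Monotone (mlin1 F) := by
  intro x y hxy
  rw [mlin1_formula F hstep x, mlin1_formula F hstep y]
  have hfx : (⌊x⌋:ℝ) ≤ ⌊y⌋ := by exact_mod_cast Int.floor_le_floor hxy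
  have h1 : F (⌊x⌋:ℝ) ≤ F ((⌊x⌋:ℝ)+1) := hmono (by linarith)
  have h2 : F (⌊y⌋:ℝ) ≤ F ((⌊y⌋:ℝ)+1) := hmono (by linarith)
  rcases eq_or_lt_of_le (Int.floor_le_floor hxy) with heq | hlt
  · rw [heq]
    have hf : Int.fract x ≤ Int.fract y := by
      rw [Int.fract, Int.fract, heq]; linarith
    nlinarith
  · have h3 : F ((⌊x⌋:ℝ)+1) ≤ F (⌊y⌋:ℝ) := by
      apply hmono
      have : ⌊x⌋ + 1 ≤ ⌊y⌋ := hlt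
      exact_mod_cast this
    have hb1 : 0 ≤ Int.fract x := Int.fract_nonneg x
    have hb2 : Int.fract x < 1 := Int.fract_lt_one x
    have hb3 : 0 ≤ Int.fract y := Int.fract_nonneg y
    have hb4 : Int.fract y < 1 := Int.fract_lt_one y
    nlinarith

lemma mlin1_int (hstep : ∀ y : ℝ, F y = F (⌊y⌋ : ℝ)) (n : ℤ) :
    mlin1 F (n:ℝ) = F (n:ℝ) := by
  rw [mlin1_formula F hstep]
  rw [Int.fract_intCast, Int.floor_intCast]
  ring

/-- `F y < 1` for all `y` when `F k < 1` for all naturals. -/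
lemma F_lt_one_of (hstep : ∀ y : ℝ, F y = F (⌊y⌋ : ℝ)) (hneg : ∀ y : ℝ, y < 0 → F y = 0)
    (hall : ∀ k : ℕ, F (k:ℝ) < 1) (y : ℝ) : F y < 1 := by
  rw [hstep y]
  rcases le_or_gt 0 ⌊y⌋ with h | h
  · have : ((⌊y⌋.toNat : ℕ) : ℝ) = (⌊y⌋ : ℝ) := by exact_mod_cast Int.toNat_of_nonneg h
    rw [← this]; exact hall _
  · rw [hneg _ (by exact_mod_cast h)]; norm_num


lemma coord_main (hmono : Monotone F)
    (hstep : ∀ y : ℝ, F y = F (⌊y⌋ : ℝ))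
    (hneg : ∀ y : ℝ, y < 0 → F y = 0)
    (h0 : ∀ y, 0 ≤ F y) (h1 : ∀ y, F y ≤ 1)
    (hlim : ∀ v : ℝ, v < 1 → ∃ k : ℕ, v ≤ F (k:ℝ))
    (u : ℝ) (hu0 : 0 ≤ u) (hu1 : u ≤ 1) :
    ∃ (m : ℤ) (t : ℝ), genInv (mlin1 F) u = (m:ℝ) + t ∧ 0 ≤ t ∧ t < 1 ∧
    ∀ g : ℝ → ℝ, (∀ y y' : ℝ, F y = F y' → g y = g y') →
      (1-t) * g ((m:ℝ)) + t * g ((m:ℝ)+1)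
      = (1 - lam F u) * g (genInv F (uMinus F u)) + lam F u * g (genInv F (uPlus F u)) := by
  by_cases hu : u = 0
  · -- Case A : u = 0
    subst hu
    refine ⟨-1, 0, ?_, le_rfl, one_pos, ?_⟩
    · rw [genInv, if_pos rfl]; norm_num
    · intro g hg
      rw [uMinus_of_mem zero_mem_clRange, uPlus_of_mem zero_mem_clRange,
        lam_of_mem zero_mem_clRange]
      have : genInv F 0 = -1 := if_pos rfl
      rw [this]
      norm_num
  · have hupos : 0 < u := lt_of_le_of_ne hu0 (Ne.symm hu)
    by_cases hex : ∃ k : ℕ, u ≤ F (k:ℝ)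
    · set k₀ := Nat.find hex with hk₀def
      have hk₀ : u ≤ F (k₀:ℝ) := Nat.find_spec hex
      have hmin : ∀ k : ℕ, k < k₀ → F (k:ℝ) < u := fun k hk =>
        lt_of_not_ge (Nat.find_min hex hk)
      -- `F (k₀ - 1) < u` (where `F(-1) = 0` if `k₀ = 0`)
      have ha_lt : F ((k₀:ℝ) - 1) < u := by
        rcases Nat.eq_zero_or_pos k₀ with h | h
        · rw [hneg _ (by rw [h]; norm_num : ((k₀:ℝ) - 1) < 0)]
          exact hupos
        · have : ((k₀:ℝ) - 1) = ((k₀ - 1 : ℕ) : ℝ) := by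
            push_cast [Nat.cast_sub h]; ring
          rw [this]
          exact hmin _ (by omega)
      -- bound on mlin1 below k₀ when F(k₀) might equal u
      by_cases heq : F (k₀:ℝ) = u
      · -- Case B1 : u is attained, u = F k₀
        have humem : u ∈ clRange F := heq ▸ Fk_mem_clRange k₀
        have hgmlin : genInv (mlin1 F) u = (k₀:ℝ) := by
          apply genInv_eq_of (mlin1_mono hmono hstep) hu
          · rw [show ((k₀:ℕ):ℝ) = (((k₀:ℤ)):ℝ) by push_cast; ring, mlin1_int hstep]
            push_cast
            rw [heq]
          · intro x hx
            by_contra hlt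
            push_neg at hlt
            have hxlt : x < ((k₀:ℤ):ℝ) := by exact_mod_cast hlt
            have hb1 : F (⌊x⌋:ℝ) ≤ F ((k₀:ℝ) - 1) := by
              have := F_le_of_lt hmono hstep hxlt
              rw [hstep x] at this
              exact_mod_cast this
            have hb2 : F ((⌊x⌋:ℝ)+1) ≤ F (k₀:ℝ) := by
              apply hmono
              have h3 : ⌊x⌋ < (k₀:ℤ) := Int.floor_lt.mpr hxlt
              have : (⌊x⌋:ℝ) + 1 ≤ ((k₀:ℤ):ℝ) := by exact_mod_cast h3
              push_cast at this ⊢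
              linarith
            rw [mlin1_formula F hstep x] at hx
            have hf0 : 0 ≤ Int.fract x := Int.fract_nonneg x
            have hf1 : Int.fract x < 1 := Int.fract_lt_one x
            nlinarith
        refine ⟨(k₀:ℤ), 0, by push_cast [hgmlin]; ring, le_rfl, one_pos, ?_⟩
        intro g hg
        rw [uMinus_of_mem humem, uPlus_of_mem humem, lam_of_mem humem]
        have hginv : genInv F u = (k₀:ℝ) := by
          apply genInv_eq_of hmono hu
          · rw [heq]
          · intro x hx
            by_contra hlt
            push_neg at hlt
            have hxlt : x < ((k₀:ℤ):ℝ) := by exact_mod_cast hlt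
            have := F_le_of_lt hmono hstep hxlt
            push_cast at this
            linarith
        rw [hginv]
        push_cast
        ring
      · -- Case B2 : F k₀ > u
        have hblt : u < F (k₀:ℝ) := lt_of_le_of_ne hk₀ (Ne.symm heq)
        set a := F ((k₀:ℝ) - 1) with hadef
        set b := F (k₀:ℝ) with hbdef
        have hab : a < b := lt_trans ha_lt hblt
        set lmb := (u - a) / (b - a) with hlmbdef
        have hlmb0 : 0 < lmb := div_pos (by linarith) (by linarith)
        have hlmb1 : lmb < 1 := (div_lt_one (by linarith)).mpr (by linarith)
        -- value of mlin1 at k₀ - 1 + lmb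
        set x₀ := (k₀:ℝ) - 1 + lmb with hx₀def
        have hfloorx₀ : ⌊x₀⌋ = (k₀:ℤ) - 1 := by
          rw [Int.floor_eq_iff]
          constructor
          · push_cast; linarith
          · push_cast; linarith
        have hfractx₀ : Int.fract x₀ = lmb := by
          rw [Int.fract, hfloorx₀]; push_cast; ring
        have hvalx₀ : mlin1 F x₀ = u := by
          rw [mlin1_formula F hstep x₀, hfractx₀, hfloorx₀]
          push_cast
          have e2 : ((k₀:ℝ) - 1 + 1) = (k₀:ℝ) := by ring
          rw [e2, ← hadef, ← hbdef]
          have hlin : (1 - lmb) * a + lmb * b = a + lmb * (b - a) := by ring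
          rw [hlin, hlmbdef, div_mul_cancel₀ _ (by linarith : b - a ≠ 0)]
          ring
        have hgmlin : genInv (mlin1 F) u = x₀ := by
          apply genInv_eq_of (mlin1_mono hmono hstep) hu (le_of_eq hvalx₀.symm)
          intro x hx
          by_contra hlt
          push_neg at hlt
          rw [mlin1_formula F hstep x] at hx
          have hf0 : 0 ≤ Int.fract x := Int.fract_nonneg x
          have hf1 : Int.fract x < 1 := Int.fract_lt_one x
          rcases lt_or_ge x ((k₀:ℝ) - 1) with hc | hc
          · -- x < k₀ - 1 : mlin1 x ≤ a < u
            have hxlt : x < (((k₀:ℤ) - 1 : ℤ):ℝ) := by push_cast; linarith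
            have hb1 : F (⌊x⌋:ℝ) ≤ a := by
              have h3 : ⌊x⌋ ≤ (k₀:ℤ) - 2 := by
                have := Int.floor_lt.mpr hxlt; omega
              rw [hadef]
              apply hmono
              have : (⌊x⌋:ℝ) ≤ (((k₀:ℤ) - 2 : ℤ):ℝ) := by exact_mod_cast h3
              push_cast at this ⊢
              linarith
            have hb2 : F ((⌊x⌋:ℝ)+1) ≤ a := by
              have h3 : ⌊x⌋ ≤ (k₀:ℤ) - 2 := by
                have := Int.floor_lt.mpr hxlt; omega
              rw [hadef]
              apply hmono
              have : (⌊x⌋:ℝ) ≤ (((k₀:ℤ) - 2 : ℤ):ℝ) := by exact_mod_cast h3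
              push_cast at this ⊢
              linarith
            nlinarith
          · -- k₀ - 1 ≤ x < x₀ : floor = k₀ - 1, fract < lmb
            have hfl : ⌊x⌋ = (k₀:ℤ) - 1 := by
              rw [Int.floor_eq_iff]
              constructor
              · push_cast; linarith
              · push_cast; linarith
            have hfr : Int.fract x < lmb := by
              rw [Int.fract, hfl]; push_cast; linarith
            rw [hfl] at hx
            push_cast at hx
            have e2 : ((k₀:ℝ) - 1 + 1) = (k₀:ℝ) := by ring
            rw [e2] at hx
            rw [← hadef, ← hbdef] at hx
            -- hx : u ≤ (1 - fract x) * a + fract x * b, but fract x < lmb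
            have : (1 - Int.fract x) * a + Int.fract x * b < u := by
              have hlin : (1 - Int.fract x) * a + Int.fract x * b
                  = a + Int.fract x * (b - a) := by ring
              have hu' : u = a + lmb * (b - a) := by
                rw [hlmbdef, div_mul_cancel₀ _ (by linarith : b - a ≠ 0)]
                ring
              rw [hlin, hu']
              have := mul_lt_mul_of_pos_right hfr (by linarith : (0:ℝ) < b - a)
              linarith
            linarith
          done
        -- uMinus = a, uPlus = b
        have hamem : a ∈ clRange F := by
          rcases Nat.eq_zero_or_pos k₀ with h | h
          · have : a = 0 := by rw [hadef]; exact hneg _ (by rw [h]; norm_num)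
            rw [this]; exact zero_mem_clRange
          · have : a = F ((k₀ - 1 : ℕ):ℝ) := by
              rw [hadef]; congr 1; push_cast [Nat.cast_sub h]; ring
            rw [this]; exact Fk_mem_clRange _
        have huMinus : uMinus F u = a := by
          apply IsGreatest.csSup_eq
          constructor
          · exact ⟨hamem, le_of_lt ha_lt⟩
          · rintro r ⟨hr, hru⟩
            rcases hr with (h | h) | ⟨k, hk⟩
            · rw [h]; exact h0 _
            · exfalso; rw [Set.mem_singleton_iff] at h; rw [h] at hru
              have := h1 (k₀:ℝ); linarith
            · rw [← hk] at hru ⊢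
              have hklt : k < k₀ := by
                by_contra hge
                push_neg at hge
                have : F (k₀:ℝ) ≤ F (k:ℝ) := hmono (by exact_mod_cast hge)
                linarith
              have : k₀ ≠ 0 := by omega
              rw [hadef]
              apply hmono
              have : (k:ℝ) ≤ (k₀:ℝ) - 1 := by
                have : (k:ℕ) + 1 ≤ k₀ := hklt
                have := (Nat.cast_le (α := ℝ)).mpr this
                push_cast at this
                linarith
              exact this
        have huPlus : uPlus F u = b := by
          apply IsLeast.csInf_eq
          constructor
          · exact ⟨Fk_mem_clRange k₀, le_of_lt hblt⟩
          · rintro r ⟨hr, hru⟩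
            rcases hr with (h | h) | ⟨k, hk⟩
            · exfalso; rw [h] at hru; linarith
            · rw [Set.mem_singleton_iff] at h; rw [h]; exact h1 _
            · rw [← hk] at hru ⊢
              have hk₀le : k₀ ≤ k := Nat.find_le hru
              exact hmono (by exact_mod_cast hk₀le)
        have hlam : lam F u = lmb := by
          rw [lam, if_neg (by rw [huMinus, huPlus]; exact ne_of_lt hab), huMinus, huPlus]
        -- genInv F b
        have hbex : ∃ k : ℕ, b ≤ F (k:ℝ) := ⟨k₀, le_rfl⟩
        set k₁ := Nat.find hbex with hk₁def
        have hk₁spec : b ≤ F (k₁:ℝ) := Nat.find_spec hbex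
        have hk₁le : k₁ ≤ k₀ := Nat.find_le le_rfl
        have hFk₁ : F (k₁:ℝ) = b := le_antisymm (hmono (by exact_mod_cast hk₁le)) hk₁spec
        have hroutine : ∀ (v : ℝ), 0 < v → ∀ (hvex : ∃ k : ℕ, v ≤ F (k:ℝ)),
            genInv F v = ((Nat.find hvex : ℕ):ℝ) := by
          intro v hv hvex
          apply genInv_eq_of hmono (ne_of_gt hv) (Nat.find_spec hvex)
          intro x hx
          by_contra hlt
          push_neg at hlt
          have hxlt : x < ((Nat.find hvex : ℤ):ℝ) := by exact_mod_cast hlt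
          have hle := F_le_of_lt hmono hstep hxlt
          have hlt2 : F (((Nat.find hvex : ℤ):ℝ) - 1) < v := by
            rcases Nat.eq_zero_or_pos (Nat.find hvex) with h | h
            · rw [hneg (((Nat.find hvex : ℤ):ℝ) - 1) (by rw [h]; norm_num)]
              exact hv
            · have hc : (((Nat.find hvex : ℤ):ℝ) - 1) = ((Nat.find hvex - 1 : ℕ):ℝ) := by
                push_cast [Nat.cast_sub h]; ring
              rw [hc]
              exact lt_of_not_ge (Nat.find_min hvex (by omega))
          linarith
        have hgb : genInv F b = (k₁:ℝ) := by
          have := hroutine b (by linarith) hbex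
          rw [← hk₁def] at this
          exact_mod_cast this
        -- genInv F a and the F-value equality
        have hga : F (genInv F (uMinus F u)) = a := by
          rw [huMinus]
          have h0a : 0 ≤ a := by rw [hadef]; exact h0 _
          rcases eq_or_lt_of_le h0a with hz | hz
          · rw [← hz, genInv, if_pos rfl]
            rw [hneg (-1) (by norm_num)]
          · have haex : ∃ k : ℕ, a ≤ F (k:ℝ) := by
              rcases Nat.eq_zero_or_pos k₀ with h | h
              · exfalso
                rw [hadef, hneg _ (by rw [h]; norm_num : ((k₀:ℝ) - 1) < 0)] at hz
                exact lt_irrefl _ hz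
              · exact ⟨k₀ - 1, by
                  rw [hadef]
                  apply hmono
                  push_cast [Nat.cast_sub h]
                  linarith⟩
            rw [hroutine a hz haex]
            have h1' : a ≤ F ((Nat.find haex : ℕ):ℝ) := Nat.find_spec haex
            have hk₀pos : 0 < k₀ := by
              by_contra h
              push_neg at h
              have h' : k₀ = 0 := by omega
              rw [hadef, hneg _ (by rw [h']; norm_num : ((k₀:ℝ) - 1) < 0)] at hz
              exact lt_irrefl _ hz
            have hfle : (Nat.find haex : ℕ) ≤ k₀ - 1 := Nat.find_le (by
              rw [hadef]
              apply hmono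
              push_cast [Nat.cast_sub hk₀pos]
              linarith)
            have h2' : F ((Nat.find haex : ℕ):ℝ) ≤ F ((k₀:ℝ) - 1) := by
              apply hmono
              have : ((Nat.find haex : ℕ):ℝ) ≤ ((k₀ - 1 : ℕ):ℝ) := by exact_mod_cast hfle
              push_cast [Nat.cast_sub hk₀pos] at this
              linarith
            exact le_antisymm (h2'.trans_eq hadef.symm) h1'
        have hgbF : F (genInv F (uPlus F u)) = b := by
          rw [huPlus, hgb, hFk₁]
        -- assemble
        refine ⟨(k₀:ℤ) - 1, lmb, by rw [hgmlin, hx₀def]; push_cast; ring,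
          le_of_lt hlmb0, hlmb1, ?_⟩
        intro g hg
        have hg1 : g (((k₀:ℤ) - 1 : ℤ):ℝ) = g (genInv F (uMinus F u)) := by
          apply hg
          rw [hga, hadef]
          congr 1
          push_cast
          ring
        have hg2 : g ((((k₀:ℤ) - 1 : ℤ):ℝ) + 1) = g (genInv F (uPlus F u)) := by
          apply hg
          rw [hgbF, hbdef]
          congr 1
          push_cast
          ring
        rw [hlam, ← hg1, ← hg2]
    · -- Case C : u = 1 not attained
      push_neg at hex
      have hu1' : u = 1 := by
        by_contra h
        have : u < 1 := lt_of_le_of_ne hu1 h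
        obtain ⟨k, hk⟩ := hlim u this
        exact absurd hk (not_le.mpr (hex k))
      subst hu1'
      have hall : ∀ k : ℕ, F (k:ℝ) < 1 := hex
      have hFlt : ∀ y, F y < 1 := F_lt_one_of hstep hneg hall
      have hmlt : ∀ x, mlin1 F x < 1 := by
        intro x
        rw [mlin1_formula F hstep x]
        have hf0 : 0 ≤ Int.fract x := Int.fract_nonneg x
        have hf1 : Int.fract x < 1 := Int.fract_lt_one x
        nlinarith [hFlt ((⌊x⌋:ℝ)), hFlt ((⌊x⌋:ℝ)+1)]
      have hgmlin : genInv (mlin1 F) 1 = 0 := by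
        rw [genInv, if_neg one_ne_zero]
        have : {x : ℝ | (1:ℝ) ≤ mlin1 F x} = ∅ := by
          ext x; simp only [Set.mem_setOf_eq, Set.mem_empty_iff_false, iff_false, not_le]
          exact hmlt x
        rw [this, Real.sInf_empty]
      have hginv : genInv F 1 = 0 := by
        rw [genInv, if_neg one_ne_zero]
        have : {x : ℝ | (1:ℝ) ≤ F x} = ∅ := by
          ext x; simp only [Set.mem_setOf_eq, Set.mem_empty_iff_false, iff_false, not_le]
          exact hFlt x
        rw [this, Real.sInf_empty]
      refine ⟨0, 0, by rw [hgmlin]; norm_num, le_rfl, one_pos, ?_⟩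
      intro g hg
      rw [uMinus_of_mem one_mem_clRange, uPlus_of_mem one_mem_clRange,
        lam_of_mem one_mem_clRange, hginv]
      norm_num

lemma clRange_subset (h0 : ∀ y, 0 ≤ F y) (h1 : ∀ y, F y ≤ 1) :
    clRange F ⊆ Set.Icc (0:ℝ) 1 := by
  rintro r ((h | h) | ⟨k, hk⟩)
  · rw [h]; exact ⟨le_rfl, zero_le_one⟩
  · rw [Set.mem_singleton_iff] at h; rw [h]; exact ⟨zero_le_one, le_rfl⟩
  · rw [← hk]; exact ⟨h0 _, h1 _⟩

lemma uMinus_mem_Icc (h0 : ∀ y, 0 ≤ F y) (h1 : ∀ y, F y ≤ 1) {u : ℝ}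
    (hu0 : 0 ≤ u) : uMinus F u ∈ Set.Icc (0:ℝ) 1 := by
  have hmem : (0:ℝ) ∈ {r ∈ clRange F | r ≤ u} := ⟨zero_mem_clRange, hu0⟩
  have hbdd : BddAbove {r ∈ clRange F | r ≤ u} := ⟨1, fun r hr => (clRange_subset h0 h1 hr.1).2⟩
  constructor
  · exact le_csSup hbdd hmem
  · exact csSup_le ⟨0, hmem⟩ (fun r hr => (clRange_subset h0 h1 hr.1).2)

lemma uPlus_mem_Icc (h0 : ∀ y, 0 ≤ F y) (h1 : ∀ y, F y ≤ 1) {u : ℝ}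
    (hu1 : u ≤ 1) : uPlus F u ∈ Set.Icc (0:ℝ) 1 := by
  have hmem : (1:ℝ) ∈ {r ∈ clRange F | u ≤ r} := ⟨one_mem_clRange, hu1⟩
  have hbdd : BddBelow {r ∈ clRange F | u ≤ r} := ⟨0, fun r hr => (clRange_subset h0 h1 hr.1).1⟩
  constructor
  · exact le_csInf ⟨1, hmem⟩ (fun r hr => (clRange_subset h0 h1 hr.1).1)
  · exact csInf_le hbdd hmem

lemma uPlus_mem_clRange (hmono : Monotone F)
    (h1 : ∀ y, F y ≤ 1)
    (hlim : ∀ v : ℝ, v < 1 → ∃ k : ℕ, v ≤ F (k:ℝ))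
    {u : ℝ} (hu0 : 0 ≤ u) (hu1 : u ≤ 1) : uPlus F u ∈ clRange F := by
  rcases eq_or_lt_of_le hu0 with hz | hz
  · rw [← hz, uPlus_of_mem zero_mem_clRange]; exact zero_mem_clRange
  by_cases hex : ∃ k : ℕ, u ≤ F (k:ℝ)
  · have hP : uPlus F u = F ((Nat.find hex : ℕ):ℝ) := by
      apply IsLeast.csInf_eq
      constructor
      · exact ⟨Fk_mem_clRange _, Nat.find_spec hex⟩
      · rintro r ⟨hr, hur⟩
        rcases hr with (h | h) | ⟨k, hk⟩
        · exfalso; rw [h] at hur; linarith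
        · rw [Set.mem_singleton_iff] at h; rw [h]; exact h1 _
        · rw [← hk] at hur ⊢
          exact hmono (by exact_mod_cast Nat.find_le hur)
    rw [hP]; exact Fk_mem_clRange _
  · have hu1' : u = 1 := by
      by_contra h
      obtain ⟨k, hk⟩ := hlim u (lt_of_le_of_ne hu1 h)
      exact hex ⟨k, hk⟩
    rw [hu1', uPlus_of_mem one_mem_clRange]; exact one_mem_clRange

lemma uMinus_mem_clRange (hmono : Monotone F)
    (h0 : ∀ y, 0 ≤ F y) (h1 : ∀ y, F y ≤ 1)
    (hlim : ∀ v : ℝ, v < 1 → ∃ k : ℕ, v ≤ F (k:ℝ))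
    {u : ℝ} (hu0 : 0 ≤ u) (hu1 : u ≤ 1) : uMinus F u ∈ clRange F := by
  by_cases hex : ∃ k : ℕ, u < F (k:ℝ)
  · set k₀ := Nat.find hex with hk₀def
    have hk₀ : u < F ((k₀:ℕ):ℝ) := Nat.find_spec hex
    set a : ℝ := if h : k₀ = 0 then 0 else F ((k₀ - 1 : ℕ):ℝ) with hadef
    have hamem : a ∈ clRange F := by
      rw [hadef]; split
      · exact zero_mem_clRange
      · exact Fk_mem_clRange _
    have hau : a ≤ u := by
      rw [hadef]; split
      · exact hu0
      · rename_i h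
        exact le_of_not_gt (Nat.find_min hex (by omega))
    have hM : uMinus F u = a := by
      apply IsGreatest.csSup_eq
      refine ⟨⟨hamem, hau⟩, ?_⟩
      rintro r ⟨hr, hur⟩
      rcases hr with (h | h) | ⟨k, hk⟩
      · rw [h, hadef]; split
        · exact le_rfl
        · exact h0 _
      · exfalso
        rw [Set.mem_singleton_iff] at h
        rw [h] at hur
        have := h1 ((k₀:ℕ):ℝ)
        linarith
      · rw [← hk] at hur ⊢
        have hklt : k < k₀ := by
          by_contra hge
          push_neg at hge
          have : F ((k₀:ℕ):ℝ) ≤ F (k:ℝ) := hmono (by exact_mod_cast hge)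
          linarith
        have hk₀pos : k₀ ≠ 0 := by omega
        rw [hadef, dif_neg hk₀pos]
        exact hmono (by exact_mod_cast (by omega : k ≤ k₀ - 1))
    rw [hM]; exact hamem
  · push_neg at hex
    have hu1' : u = 1 := by
      refine le_antisymm hu1 ?_
      by_contra h
      push_neg at h
      obtain ⟨k, hk⟩ := hlim ((u+1)/2) (by linarith)
      exact absurd (lt_of_lt_of_le (by linarith) hk) (not_lt.mpr (hex k))
    rw [hu1', uMinus_of_mem one_mem_clRange]; exact one_mem_clRange

end CoordSec

lemma mlin_expand (d : ℕ) (H : (Fin d → ℝ) → ℝ)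
    (hHstep : ∀ y : Fin d → ℝ, H y = H (fun j => (⌊y j⌋ : ℝ)))
    (x : Fin d → ℝ) :
    mlin d H x = ∑ T : Finset (Fin d),
      (∏ j, (if j ∈ T then Int.fract (x j) else 1 - Int.fract (x j))) *
      H (fun j => (⌊x j⌋:ℝ) + if j ∈ T then 1 else 0) := by
  classical
  set t : Fin d → ℝ := fun j => Int.fract (x j) with htdef
  have ht0 : ∀ j, 0 ≤ t j := fun j => Int.fract_nonneg _
  have ht1 : ∀ j, t j < 1 := fun j => Int.fract_lt_one _
  set B : Finset (Fin d) → Set (Fin d → ℝ) := fun T =>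
    Set.pi Set.univ (fun j => if j ∈ T then Set.Icc (1 - t j) 1 else Set.Ico 0 (1 - t j))
    with hBdef
  have hBsub : ∀ T, B T ⊆ Set.Icc (0 : Fin d → ℝ) 1 := by
    intro T z hz
    rw [Set.mem_Icc]
    constructor <;> intro j <;> have hj := hz j (Set.mem_univ j) <;>
      dsimp only at hj <;> simp only [Pi.zero_apply, Pi.one_apply] <;> by_cases h : j ∈ T
    · rw [if_pos h] at hj
      exact le_trans (by linarith [ht1 j]) hj.1
    · rw [if_neg h] at hj
      exact hj.1
    · rw [if_pos h] at hj
      exact hj.2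
    · rw [if_neg h] at hj
      exact le_trans hj.2.le (by linarith [ht0 j])
  have hBmeas : ∀ T, MeasurableSet (B T) := by
    intro T
    apply MeasurableSet.univ_pi
    intro j
    by_cases h : j ∈ T <;> simp only [h, if_true, if_false]
    · exact measurableSet_Icc
    · exact measurableSet_Ico
  have key := setIntegral_eq_sum_indicator (measurableSet_Icc
      (a := (0 : Fin d → ℝ)) (b := 1)) Finset.univ B
    (fun T _ => hBmeas T)
    (fun T => H (fun j => (⌊x j⌋:ℝ) + if j ∈ T then 1 else 0))
    (fun u => H (x + u)) ?_ ?_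
  · rw [mlin, key]
    apply Finset.sum_congr rfl
    intro T _
    have hint : Set.Icc (0 : Fin d → ℝ) 1 ∩ B T = B T := Set.inter_eq_right.mpr (hBsub T)
    rw [hint, hBdef]
    rw [volume_pi_pi]
    rw [ENNReal.toReal_prod]
    rw [mul_comm]
    congr 1
    apply Finset.prod_congr rfl
    intro j _
    by_cases h : j ∈ T <;> simp only [h, if_true, if_false]
    · rw [Real.volume_Icc, ENNReal.toReal_ofReal (by linarith [ht0 j])]
      ring
    · rw [Real.volume_Ico, ENNReal.toReal_ofReal (by linarith [ht1 j])]
      ring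
  · intro T _
    refine ne_of_lt (lt_of_le_of_lt (measure_mono Set.inter_subset_right) ?_)
    rw [← Set.pi_univ_Icc, volume_pi_pi]
    simp [Real.volume_Icc]
  · intro v hv
    rw [Set.mem_Icc] at hv
    obtain ⟨hv0p, hv1p⟩ := hv
    have hv0 : ∀ j, (0:ℝ) ≤ v j := fun j => by simpa using hv0p j
    have hv1 : ∀ j, v j ≤ 1 := fun j => by simpa using hv1p j
    set T₀ : Finset (Fin d) := Finset.univ.filter (fun j => 1 - t j ≤ v j) with hT₀def
    have hmemT₀ : ∀ j, j ∈ T₀ ↔ 1 - t j ≤ v j := by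
      intro j; rw [hT₀def, Finset.mem_filter]; simp
    have hvB : v ∈ B T₀ := by
      intro j _
      dsimp only
      by_cases h : j ∈ T₀ <;> simp only [h, if_true, if_false]
      · exact ⟨(hmemT₀ j).mp h, hv1 j⟩
      · exact ⟨hv0 j, lt_of_not_ge (fun hc => h ((hmemT₀ j).mpr hc))⟩
    have hval : H (x + v) = H (fun j => (⌊x j⌋:ℝ) + if j ∈ T₀ then 1 else 0) := by
      rw [hHstep (x + v)]
      congr 1
      funext j
      have hxt : (⌊x j⌋:ℝ) + t j = x j := Int.floor_add_fract (x j)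
      by_cases h : j ∈ T₀ <;> simp only [h, if_true, if_false]
      · have h' : 1 - t j ≤ v j := (hmemT₀ j).mp h
        have : ⌊(x + v) j⌋ = ⌊x j⌋ + 1 := by
          rw [Pi.add_apply, Int.floor_eq_iff]
          constructor
          · push_cast; linarith
          · push_cast; linarith [hv1 j, ht1 j]
        rw [this]; push_cast; ring
      · have h' : v j < 1 - t j := lt_of_not_ge (fun hc => h ((hmemT₀ j).mpr hc))
        have : ⌊(x + v) j⌋ = ⌊x j⌋ := by
          rw [Pi.add_apply, Int.floor_eq_iff]
          constructor
          · push_cast; linarith [hv0 j, Int.floor_le (x j)]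
          · push_cast; linarith
        rw [this]; push_cast; ring
    show H (x + v) = _
    rw [hval]
    rw [Finset.sum_eq_single T₀]
    · rw [Set.indicator_of_mem hvB]; simp
    · intro T _ hne
      have hvnB : v ∉ B T := by
        intro hc
        apply hne
        apply Finset.ext
        intro j
        have := hc j (Set.mem_univ j)
        dsimp only at this
        constructor
        · intro hj
          rw [if_pos hj] at this
          exact (hmemT₀ j).mpr this.1
        · intro hj
          by_contra hjT
          rw [if_neg hjT] at this
          exact absurd ((hmemT₀ j).mp hj) (not_le.mpr this.2)
      rw [Set.indicator_of_notMem hvnB]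
      simp
    · intro h
      exact absurd (Finset.mem_univ T₀) h

lemma swap_sum {d : ℕ} (p q a b c e w : Fin d → ℝ) :
    ∀ (A : Finset (Fin d)) (G : (Fin d → ℝ) → ℝ),
    (∀ i ∈ A, ∀ z : Fin d → ℝ,
      (1 - p i) * G (Function.update z i (a i)) + p i * G (Function.update z i (b i))
      = (1 - q i) * G (Function.update z i (c i)) + q i * G (Function.update z i (e i))) →
    ∑ S ∈ A.powerset, ((∏ j ∈ S, p j) * ∏ j ∈ A \ S, (1 - p j)) *
        G (fun j => if j ∈ S then b j else if j ∈ A then a j else w j)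
    = ∑ S ∈ A.powerset, ((∏ j ∈ S, q j) * ∏ j ∈ A \ S, (1 - q j)) *
        G (fun j => if j ∈ S then e j else if j ∈ A then c j else w j) := by
  classical
  intro A
  induction A using Finset.induction_on with
  | empty =>
    intro G _
    simp
  | insert i A hi ih =>
    intro G hcoord
    rw [Finset.sum_powerset_insert hi, Finset.sum_powerset_insert hi]
    -- rewrite selector functions via Function.update
    have hselp : ∀ (v₁ v₂ : Fin d → ℝ) (S : Finset (Fin d)), S ∈ A.powerset →
        (fun j => if j ∈ S then v₁ j else if j ∈ insert i A then v₂ j else w j)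
        = Function.update (fun j => if j ∈ S then v₁ j else if j ∈ A then v₂ j else w j) i (v₂ i) := by
      intro v₁ v₂ S hS
      rw [Finset.mem_powerset] at hS
      funext j
      rcases eq_or_ne j i with rfl | hne
      · rw [Function.update_self, if_neg (fun hc => hi (hS hc)), if_pos (Finset.mem_insert_self _ _)]
      · rw [Function.update_of_ne hne]
        by_cases hjS : j ∈ S
        · rw [if_pos hjS, if_pos hjS]
        · rw [if_neg hjS, if_neg hjS]
          by_cases hjA : j ∈ A
          · rw [if_pos (Finset.mem_insert_of_mem hjA), if_pos hjA]
          · rw [if_neg (by simp [hne, hjA]), if_neg hjA]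
    have hselins : ∀ (v₁ v₂ : Fin d → ℝ) (S : Finset (Fin d)), S ∈ A.powerset →
        (fun j => if j ∈ insert i S then v₁ j else if j ∈ insert i A then v₂ j else w j)
        = Function.update (fun j => if j ∈ S then v₁ j else if j ∈ A then v₂ j else w j) i (v₁ i) := by
      intro v₁ v₂ S hS
      rw [Finset.mem_powerset] at hS
      funext j
      rcases eq_or_ne j i with rfl | hne
      · rw [Function.update_self, if_pos (Finset.mem_insert_self _ _)]
      · rw [Function.update_of_ne hne]
        by_cases hjS : j ∈ S
        · rw [if_pos (Finset.mem_insert_of_mem hjS), if_pos hjS]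
        · rw [if_neg (by simp [hne, hjS]), if_neg hjS]
          by_cases hjA : j ∈ A
          · rw [if_pos (Finset.mem_insert_of_mem hjA), if_pos hjA]
          · rw [if_neg (by simp [hne, hjA]), if_neg hjA]
    -- weights
    have hwp : ∀ S ∈ A.powerset, (insert i A) \ S = insert i (A \ S) := by
      intro S hS
      rw [Finset.mem_powerset] at hS
      rw [Finset.insert_sdiff_of_notMem _ (fun hc => hi (hS hc))]
    have hwpi : ∀ S ∈ A.powerset, (insert i A) \ (insert i S) = A \ S := by
      intro S hS
      rw [Finset.mem_powerset] at hS
      ext j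
      simp only [Finset.mem_sdiff, Finset.mem_insert]
      constructor
      · rintro ⟨hj1, hj2⟩
        push_neg at hj2
        rcases hj1 with rfl | hj1
        · exact absurd rfl hj2.1
        · exact ⟨hj1, hj2.2⟩
      · rintro ⟨hj1, hj2⟩
        exact ⟨Or.inr hj1, by push_neg; exact ⟨fun hc => hi (hc ▸ hj1), hj2⟩⟩
    -- package both sums on each side and apply hcoord then ih
    have step : ∀ (P Q : Fin d → ℝ) (V₁ V₂ : Fin d → ℝ),
        (∀ z : Fin d → ℝ,
          (1 - P i) * G (Function.update z i (V₂ i)) + P i * G (Function.update z i (V₁ i))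
          = (1 - q i) * G (Function.update z i (c i)) + q i * G (Function.update z i (e i))) →
        True := fun _ _ _ _ _ => trivial
    -- LHS transform
    have lhs_eq :
        (∑ S ∈ A.powerset, ((∏ j ∈ S, p j) * ∏ j ∈ (insert i A) \ S, (1 - p j)) *
          G (fun j => if j ∈ S then b j else if j ∈ insert i A then a j else w j))
        + ∑ S ∈ A.powerset, ((∏ j ∈ insert i S, p j) * ∏ j ∈ (insert i A) \ (insert i S), (1 - p j)) *
          G (fun j => if j ∈ insert i S then b j else if j ∈ insert i A then a j else w j)
        = ∑ S ∈ A.powerset, ((∏ j ∈ S, p j) * ∏ j ∈ A \ S, (1 - p j)) *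
            ((1 - p i) * G (Function.update (fun j => if j ∈ S then b j else if j ∈ A then a j else w j) i (a i))
             + p i * G (Function.update (fun j => if j ∈ S then b j else if j ∈ A then a j else w j) i (b i))) := by
      rw [← Finset.sum_add_distrib]
      apply Finset.sum_congr rfl
      intro S hS
      have hiS : i ∉ S := fun hc => hi (Finset.mem_powerset.mp hS hc)
      rw [hselp b a S hS, hselins b a S hS, hwp S hS, hwpi S hS,
        Finset.prod_insert (by simp [hi, Finset.mem_sdiff] : i ∉ A \ S),
        Finset.prod_insert hiS]
      ring
    have rhs_eq :
        (∑ S ∈ A.powerset, ((∏ j ∈ S, q j) * ∏ j ∈ (insert i A) \ S, (1 - q j)) *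
          G (fun j => if j ∈ S then e j else if j ∈ insert i A then c j else w j))
        + ∑ S ∈ A.powerset, ((∏ j ∈ insert i S, q j) * ∏ j ∈ (insert i A) \ (insert i S), (1 - q j)) *
          G (fun j => if j ∈ insert i S then e j else if j ∈ insert i A then c j else w j)
        = ∑ S ∈ A.powerset, ((∏ j ∈ S, q j) * ∏ j ∈ A \ S, (1 - q j)) *
            ((1 - q i) * G (Function.update (fun j => if j ∈ S then e j else if j ∈ A then c j else w j) i (c i))
             + q i * G (Function.update (fun j => if j ∈ S then e j else if j ∈ A then c j else w j) i (e i))) := by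
      rw [← Finset.sum_add_distrib]
      apply Finset.sum_congr rfl
      intro S hS
      have hiS : i ∉ S := fun hc => hi (Finset.mem_powerset.mp hS hc)
      rw [hselp e c S hS, hselins e c S hS, hwp S hS, hwpi S hS,
        Finset.prod_insert (by simp [hi, Finset.mem_sdiff] : i ∉ A \ S),
        Finset.prod_insert hiS]
      ring
    rw [lhs_eq, rhs_eq]
    -- apply hcoord at i pointwise
    have mid :
        ∑ S ∈ A.powerset, ((∏ j ∈ S, p j) * ∏ j ∈ A \ S, (1 - p j)) *
            ((1 - p i) * G (Function.update (fun j => if j ∈ S then b j else if j ∈ A then a j else w j) i (a i))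
             + p i * G (Function.update (fun j => if j ∈ S then b j else if j ∈ A then a j else w j) i (b i)))
        = ∑ S ∈ A.powerset, ((∏ j ∈ S, p j) * ∏ j ∈ A \ S, (1 - p j)) *
            ((1 - q i) * G (Function.update (fun j => if j ∈ S then b j else if j ∈ A then a j else w j) i (c i))
             + q i * G (Function.update (fun j => if j ∈ S then b j else if j ∈ A then a j else w j) i (e i))) := by
      apply Finset.sum_congr rfl
      intro S _
      rw [hcoord i (Finset.mem_insert_self _ _) _]
    rw [mid]
    -- split into two sums and apply ih with modified G
    have split1 :
        ∑ S ∈ A.powerset, ((∏ j ∈ S, p j) * ∏ j ∈ A \ S, (1 - p j)) *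
            ((1 - q i) * G (Function.update (fun j => if j ∈ S then b j else if j ∈ A then a j else w j) i (c i))
             + q i * G (Function.update (fun j => if j ∈ S then b j else if j ∈ A then a j else w j) i (e i)))
        = (1 - q i) * ∑ S ∈ A.powerset, ((∏ j ∈ S, p j) * ∏ j ∈ A \ S, (1 - p j)) *
            (fun f => G (Function.update f i (c i))) (fun j => if j ∈ S then b j else if j ∈ A then a j else w j)
          + q i * ∑ S ∈ A.powerset, ((∏ j ∈ S, p j) * ∏ j ∈ A \ S, (1 - p j)) *
            (fun f => G (Function.update f i (e i))) (fun j => if j ∈ S then b j else if j ∈ A then a j else w j) := by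
      rw [Finset.mul_sum, Finset.mul_sum, ← Finset.sum_add_distrib]
      apply Finset.sum_congr rfl
      intro S _
      ring
    have split2 :
        ∑ S ∈ A.powerset, ((∏ j ∈ S, q j) * ∏ j ∈ A \ S, (1 - q j)) *
            ((1 - q i) * G (Function.update (fun j => if j ∈ S then e j else if j ∈ A then c j else w j) i (c i))
             + q i * G (Function.update (fun j => if j ∈ S then e j else if j ∈ A then c j else w j) i (e i)))
        = (1 - q i) * ∑ S ∈ A.powerset, ((∏ j ∈ S, q j) * ∏ j ∈ A \ S, (1 - q j)) *
            (fun f => G (Function.update f i (c i))) (fun j => if j ∈ S then e j else if j ∈ A then c j else w j)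
          + q i * ∑ S ∈ A.powerset, ((∏ j ∈ S, q j) * ∏ j ∈ A \ S, (1 - q j)) *
            (fun f => G (Function.update f i (e i))) (fun j => if j ∈ S then e j else if j ∈ A then c j else w j) := by
      rw [Finset.mul_sum, Finset.mul_sum, ← Finset.sum_add_distrib]
      apply Finset.sum_congr rfl
      intro S _
      ring
    rw [split1, split2]
    have hcoord' : ∀ (y : ℝ), ∀ i' ∈ A, ∀ z : Fin d → ℝ,
        (1 - p i') * (fun f => G (Function.update f i y)) (Function.update z i' (a i'))
          + p i' * (fun f => G (Function.update f i y)) (Function.update z i' (b i'))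
        = (1 - q i') * (fun f => G (Function.update f i y)) (Function.update z i' (c i'))
          + q i' * (fun f => G (Function.update f i y)) (Function.update z i' (e i')) := by
      intro y i' hi' z
      have hne : i' ≠ i := fun hc => hi (hc ▸ hi')
      dsimp only
      rw [Function.update_comm hne, Function.update_comm hne, Function.update_comm hne,
        Function.update_comm hne]
      exact hcoord i' (Finset.mem_insert_of_mem hi') (Function.update z i y)
    rw [ih (fun f => G (Function.update f i (c i))) (hcoord' (c i)),
      ih (fun f => G (Function.update f i (e i))) (hcoord' (e i))]

theorem multilinear_copula_formula
    {Ω : Type*} [MeasurableSpace Ω] (P : Measure Ω) [IsProbabilityMeasure P]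
    (d : ℕ) (hd : 1 ≤ d) (X : Ω → Fin d → ℝ) (hX : Measurable X)
    (hNat : ∀ ω j, ∃ k : ℕ, X ω j = k)
    (H : (Fin d → ℝ) → ℝ) (F : Fin d → ℝ → ℝ)
    (hH : ∀ x, H x = (P {ω | ∀ j, X ω j ≤ x j}).toReal)
    (hF : ∀ j x, F j x = (P {ω | X ω j ≤ x}).toReal) :
    (∀ u : Fin d → ℝ, u ∈ Set.Icc (0 : Fin d → ℝ) 1 →
      mlinCopula d H F u
        = ∑ S : Finset (Fin d),
            lamS d F S u * H (fun j => genInv (F j) (uSel d F S u j)))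
    ∧ (∀ (S : Finset (Fin d)) (u : Fin d → ℝ), u ∈ Set.Icc (0 : Fin d → ℝ) 1 →
      mlinCopula d H F (uSel d F S u)
        = H (fun j => genInv (F j) (uSel d F S u j))) := by
  classical
  -- measurability of coordinate maps and basic events
  have hXj : ∀ j, Measurable (fun ω => X ω j) := fun j => (measurable_pi_apply j).comp hX
  have hmeasle : ∀ j (y : ℝ), MeasurableSet {ω | X ω j ≤ y} := fun j y =>
    (hXj j) measurableSet_Iic
  -- basic properties of the margins
  have hFmono : ∀ j, Monotone (F j) := by
    intro j x y hxy
    rw [hF, hF]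
    exact ENNReal.toReal_mono (measure_ne_top P _)
      (measure_mono (fun ω hω => le_trans hω hxy))
  have hFstep : ∀ j (y : ℝ), F j y = F j (⌊y⌋ : ℝ) := by
    intro j y
    rw [hF, hF]
    congr 1
    apply congrArg
    ext ω
    obtain ⟨k, hk⟩ := hNat ω j
    simp only [Set.mem_setOf_eq, hk]
    constructor
    · intro h
      exact_mod_cast Int.le_floor.mpr (by exact_mod_cast h)
    · intro h
      calc ((k:ℕ):ℝ) ≤ (⌊y⌋:ℝ) := h
        _ ≤ y := Int.floor_le y
  have hFneg : ∀ j (y : ℝ), y < 0 → F j y = 0 := by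
    intro j y hy
    rw [hF]
    have hempty : {ω | X ω j ≤ y} = ∅ := by
      ext ω
      obtain ⟨k, hk⟩ := hNat ω j
      simp only [Set.mem_setOf_eq, hk, Set.mem_empty_iff_false, iff_false, not_le]
      calc y < 0 := hy
        _ ≤ ((k:ℕ):ℝ) := by positivity
    rw [hempty]
    simp
  have hF0 : ∀ j (y : ℝ), 0 ≤ F j y := fun j y => by rw [hF]; exact ENNReal.toReal_nonneg
  have hF1 : ∀ j (y : ℝ), F j y ≤ 1 := by
    intro j y
    rw [hF]
    calc (P {ω | X ω j ≤ y}).toReal ≤ (P Set.univ).toReal :=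
      ENNReal.toReal_mono (measure_ne_top P _) (measure_mono (Set.subset_univ _))
      _ = 1 := by simp
  have hFlim : ∀ j (v : ℝ), v < 1 → ∃ k : ℕ, v ≤ F j (k:ℝ) := by
    intro j v hv
    by_cases hv0 : v < 0
    · exact ⟨0, le_trans hv0.le (hF0 j ((0:ℕ):ℝ))⟩
    push_neg at hv0
    have hunion : (⋃ k : ℕ, {ω | X ω j ≤ (k:ℝ)}) = Set.univ := by
      ext ω
      simp only [Set.mem_iUnion, Set.mem_setOf_eq, Set.mem_univ, iff_true]
      obtain ⟨k, hk⟩ := hNat ω j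
      exact ⟨k, le_of_eq hk⟩
    have hdir : Directed (· ⊆ ·) (fun k : ℕ => {ω | X ω j ≤ (k:ℝ)}) := by
      apply Monotone.directed_le
      intro k l hkl ω hω
      simp only [Set.mem_setOf_eq] at hω ⊢
      exact le_trans hω (by exact_mod_cast hkl)
    have hsup : (⨆ k : ℕ, P {ω | X ω j ≤ (k:ℝ)}) = 1 := by
      rw [← hdir.measure_iUnion, hunion, measure_univ]
    have hlt : ENNReal.ofReal v < ⨆ k : ℕ, P {ω | X ω j ≤ (k:ℝ)} := by
      rw [hsup]
      exact ENNReal.ofReal_lt_one.mpr hv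
    obtain ⟨k, hk⟩ := lt_iSup_iff.mp hlt
    refine ⟨k, ?_⟩
    rw [hF]
    calc v = (ENNReal.ofReal v).toReal := by rw [ENNReal.toReal_ofReal hv0]
      _ ≤ (P {ω | X ω j ≤ (k:ℝ)}).toReal :=
        ENNReal.toReal_mono (measure_ne_top P _) hk.le
  -- properties of H
  have hHstep : ∀ y : Fin d → ℝ, H y = H (fun j => (⌊y j⌋ : ℝ)) := by
    intro y
    rw [hH, hH]
    congr 1
    apply congrArg
    ext ω
    simp only [Set.mem_setOf_eq]
    apply forall_congr'
    intro j
    obtain ⟨k, hk⟩ := hNat ω j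
    rw [hk]
    constructor
    · intro h
      exact_mod_cast Int.le_floor.mpr (by exact_mod_cast h)
    · intro h
      calc ((k:ℕ):ℝ) ≤ (⌊y j⌋:ℝ) := h
        _ ≤ y j := Int.floor_le (y j)
  have hHresp : ∀ (z : Fin d → ℝ) (i : Fin d) (y y' : ℝ), F i y = F i y' →
      H (Function.update z i y) = H (Function.update z i y') := by
    have core : ∀ (z : Fin d → ℝ) (i : Fin d) (y y' : ℝ), y ≤ y' → F i y = F i y' →
        H (Function.update z i y) = H (Function.update z i y') := by
      intro z i y y' hle hFeq
      rw [hH, hH]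
      congr 1
      have hPeq : P {ω | X ω i ≤ y} = P {ω | X ω i ≤ y'} := by
        rw [hF, hF] at hFeq
        exact (ENNReal.toReal_eq_toReal_iff' (measure_ne_top P _) (measure_ne_top P _)).mp hFeq
      have hD : P ({ω | X ω i ≤ y'} \ {ω | X ω i ≤ y}) = 0 := by
        have h := measure_diff (μ := P) (s₁ := {ω | X ω i ≤ y'}) (s₂ := {ω | X ω i ≤ y})
          (fun ω hω => le_trans hω hle) ((hmeasle i y).nullMeasurableSet) (measure_ne_top P _)
        rw [h, hPeq]
        exact tsub_self _
      apply le_antisymm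
      · apply measure_mono
        intro ω hω
        simp only [Set.mem_setOf_eq] at hω ⊢
        intro j
        rcases eq_or_ne j i with rfl | hne
        · rw [Function.update_self]
          have := hω j
          rw [Function.update_self] at this
          exact le_trans this hle
        · rw [Function.update_of_ne hne]
          have := hω j
          rw [Function.update_of_ne hne] at this
          exact this
      · calc P {ω | ∀ j, X ω j ≤ Function.update z i y' j}
            ≤ P ({ω | ∀ j, X ω j ≤ Function.update z i y j}
                ∪ ({ω | X ω i ≤ y'} \ {ω | X ω i ≤ y})) := by
              apply measure_mono
              intro ω hω
              simp only [Set.mem_setOf_eq] at hω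
              by_cases hXy : X ω i ≤ y
              · left
                simp only [Set.mem_setOf_eq]
                intro j
                rcases eq_or_ne j i with rfl | hne
                · rw [Function.update_self]; exact hXy
                · rw [Function.update_of_ne hne]
                  have := hω j
                  rw [Function.update_of_ne hne] at this
                  exact this
              · right
                refine ⟨?_, hXy⟩
                have := hω i
                rw [Function.update_self] at this
                exact this
          _ ≤ P {ω | ∀ j, X ω j ≤ Function.update z i y j}
              + P ({ω | X ω i ≤ y'} \ {ω | X ω i ≤ y}) := measure_union_le _ _
          _ = P {ω | ∀ j, X ω j ≤ Function.update z i y j} := by rw [hD, add_zero]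
    intro z i y y' hFeq
    rcases le_total y y' with h | h
    · exact core z i y y' h hFeq
    · exact (core z i y' y h hFeq.symm).symm
  -- Part 1
  have part1 : ∀ u : Fin d → ℝ, u ∈ Set.Icc (0 : Fin d → ℝ) 1 →
      mlinCopula d H F u
        = ∑ S : Finset (Fin d), lamS d F S u * H (fun j => genInv (F j) (uSel d F S u j)) := by
    intro u hu
    rw [Set.mem_Icc] at hu
    have hu0 : ∀ j, 0 ≤ u j := fun j => by simpa using hu.1 j
    have hu1 : ∀ j, u j ≤ 1 := fun j => by simpa using hu.2 j
    choose m t hx ht0 ht1 hkey using fun j =>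
      coord_main (hFmono j) (hFstep j) (hFneg j) (hF0 j) (hF1 j) (hFlim j) (u j) (hu0 j) (hu1 j)
    have hxfun : (fun j => genInv (mlin1 (F j)) (u j)) = fun j => (m j : ℝ) + t j := funext hx
    rw [mlinCopula, hxfun, mlin_expand d H hHstep]
    have hfl : ∀ j, ⌊(m j:ℝ) + t j⌋ = m j := by
      intro j
      rw [add_comm, Int.floor_add_intCast, Int.floor_eq_zero_iff.mpr ⟨ht0 j, ht1 j⟩, zero_add]
    have hfr : ∀ j, Int.fract ((m j:ℝ) + t j) = t j := by
      intro j
      rw [Int.fract, hfl j]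
      ring
    have prod_split : ∀ (f g : Fin d → ℝ) (T : Finset (Fin d)),
        (∏ j, (if j ∈ T then f j else g j)) = (∏ j ∈ T, f j) * ∏ j ∈ Finset.univ \ T, g j := by
      intro f g T
      rw [Finset.prod_ite, Finset.filter_mem_eq_inter, Finset.univ_inter, Finset.filter_not,
        Finset.filter_mem_eq_inter, Finset.univ_inter]
    have lhs : ∑ T : Finset (Fin d),
          (∏ j, (if j ∈ T then Int.fract ((m j:ℝ) + t j) else 1 - Int.fract ((m j:ℝ) + t j))) *
          H (fun j => (⌊(m j:ℝ) + t j⌋:ℝ) + if j ∈ T then 1 else 0)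
        = ∑ T ∈ (Finset.univ : Finset (Fin d)).powerset,
            ((∏ j ∈ T, t j) * ∏ j ∈ Finset.univ \ T, (1 - t j)) *
            H (fun j => if j ∈ T then (m j:ℝ) + 1 else if j ∈ (Finset.univ : Finset (Fin d)) then (m j:ℝ) else (m j:ℝ)) := by
      rw [Finset.powerset_univ]
      apply Finset.sum_congr rfl
      intro T _
      congr 1
      · rw [← prod_split]
        apply Finset.prod_congr rfl
        intro j _
        rw [hfr j]
      · congr 1
        funext j
        rw [hfl j]
        by_cases h : j ∈ T
        · rw [if_pos h, if_pos h]
        · rw [if_neg h, if_neg h, if_pos (Finset.mem_univ j), add_zero]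
    rw [lhs, swap_sum t (fun j => lam (F j) (u j)) (fun j => (m j:ℝ)) (fun j => (m j:ℝ)+1)
      (fun j => genInv (F j) (uMinus (F j) (u j))) (fun j => genInv (F j) (uPlus (F j) (u j)))
      (fun j => (m j:ℝ)) Finset.univ H (by
        intro i _ z
        exact hkey i (fun y => H (Function.update z i y)) (fun y y' h => hHresp z i y y' h))]
    rw [Finset.powerset_univ]
    apply Finset.sum_congr rfl
    intro S _
    rw [lamS, Finset.compl_eq_univ_sdiff]
    congr 1
    congr 1
    funext j
    rw [uSel]
    by_cases h : j ∈ S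
    · rw [if_pos h, if_pos h]
    · rw [if_neg h, if_neg h, if_pos (Finset.mem_univ j)]
  refine ⟨part1, ?_⟩
  -- Part 2
  intro S u hu
  rw [Set.mem_Icc] at hu
  have hu0 : ∀ j, 0 ≤ u j := fun j => by simpa using hu.1 j
  have hu1 : ∀ j, u j ≤ 1 := fun j => by simpa using hu.2 j
  set u' := uSel d F S u with hu'def
  have hu'Icc : ∀ j, u' j ∈ Set.Icc (0:ℝ) 1 := by
    intro j
    rw [hu'def, uSel]
    by_cases h : j ∈ S
    · rw [if_pos h]; exact uPlus_mem_Icc (hF0 j) (hF1 j) (hu1 j)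
    · rw [if_neg h]; exact uMinus_mem_Icc (hF0 j) (hF1 j) (hu0 j)
  have hmem : ∀ j, u' j ∈ clRange (F j) := by
    intro j
    rw [hu'def, uSel]
    by_cases h : j ∈ S
    · rw [if_pos h]
      exact uPlus_mem_clRange (hFmono j) (hF1 j) (hFlim j) (hu0 j) (hu1 j)
    · rw [if_neg h]
      exact uMinus_mem_clRange (hFmono j) (hF0 j) (hF1 j) (hFlim j) (hu0 j) (hu1 j)
  have hu'mem : u' ∈ Set.Icc (0 : Fin d → ℝ) 1 := by
    rw [Set.mem_Icc]
    constructor <;> intro j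
    · simpa using (hu'Icc j).1
    · simpa using (hu'Icc j).2
  rw [part1 u' hu'mem]
  rw [Finset.sum_eq_single Finset.univ]
  · have h1' : lamS d F Finset.univ u' = 1 := by
      rw [lamS, Finset.compl_univ, Finset.prod_empty, mul_one]
      apply Finset.prod_eq_one
      intro j _
      exact lam_of_mem (hmem j)
    rw [h1', one_mul]
    congr 1
    funext j
    rw [uSel, if_pos (Finset.mem_univ j), uPlus_of_mem (hmem j)]
  · intro S' _ hne
    have : lamS d F S' u' = 0 := by
      obtain ⟨j, hj⟩ : ∃ j, j ∉ S' := by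
        by_contra h
        push_neg at h
        exact hne (Finset.eq_univ_iff_forall.mpr h)
      rw [lamS]
      apply mul_eq_zero_of_right
      apply Finset.prod_eq_zero (Finset.mem_compl.mpr hj)
      rw [lam_of_mem (hmem j)]
      ring
    rw [this, zero_mul]
  · intro h
    exact absurd (Finset.mem_univ _) h
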